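/- Sphere packing bound for LOBC codes: let γ: M_1 × M_2 → C ⊆ P(F_q^m)^n be a bijective encoder with separation vector (s_1, s_2), and let T_n(d, N, r) denote the minimum cardinality of an r-neighborhood of a code S ⊆ P(F_q^m)^n with |S| = N and minimum subspace distance ≥ d. Then T_n(s_1, |M_1|, ⌊(s_2−1)/2⌋) · |M_2| ≤ |P(F_q^m)|^n. -/

import Mathlib

open Module Finset

/-- Subspace distance `d_S(U,W) = dim(U+W) - dim(U∩W)`. -/
noncomputable def dS {K V : Type*} [Field K] [AddCommGroup V] [Module K V]
    (U W : Submodule K V) : ℕ :=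
  finrank K ↥(U ⊔ W) - finrank K ↥(U ⊓ W)

/-- Extended subspace distance on `n`-tuples of subspaces. -/
noncomputable def dSn {K V : Type*} [Field K] [AddCommGroup V] [Module K V] {n : ℕ}
    (X Y : Fin n → Submodule K V) : ℕ :=
  ∑ i, dS (X i) (Y i)

/-- Ball of radius `r` around a tuple of subspaces. -/
def ballS {K V : Type*} [Field K] [AddCommGroup V] [Module K V] {n : ℕ}
    (r : ℕ) (C : Fin n → Submodule K V) : Set (Fin n → Submodule K V) :=
  {U | dSn U C ≤ r}

/-- `r`-neighborhood of a set of tuples of subspaces. -/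
def nbhdS {K V : Type*} [Field K] [AddCommGroup V] [Module K V] {n : ℕ}
    (r : ℕ) (S : Set (Fin n → Submodule K V)) : Set (Fin n → Submodule K V) :=
  ⋃ C ∈ S, ballS r C

/-- Gaussian binomial coefficient `binom(a,b)_q`, realized as the number of
`b`-dimensional subspaces of `K^a` where `|K| = q`. -/
noncomputable def gaussCard (K : Type*) [Field K] (a b : ℕ) : ℕ :=
  Nat.card {W : Submodule K (Fin a → K) // finrank K ↥W = b}

/-- `T_n(d,N,r)`: the minimum cardinality of an `r`-neighborhood of a code
`S ⊆ P(F_q^m)^n` of size `N` and minimum subspace distance `≥ d`. -/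
noncomputable def Tn (K : Type*) [Field K] (m n d N r : ℕ) : ℕ :=
  sInf {t | ∃ S : Set (Fin n → Submodule K (Fin m → K)), Nat.card ↥S = N ∧
    (∀ X ∈ S, ∀ Y ∈ S, X ≠ Y → d ≤ dSn X Y) ∧ t = Nat.card ↥(nbhdS r S)}

section MetricLemmas

variable {K V : Type*} [Field K] [AddCommGroup V] [Module K V] [FiniteDimensional K V]

lemma dS_comm (U W : Submodule K V) : dS U W = dS W U := by
  rw [dS, dS, sup_comm, inf_comm]

lemma dS_cast (U W : Submodule K V) :
    (dS U W : ℤ) = finrank K ↥U + finrank K ↥W - 2 * finrank K ↥(U ⊓ W) := by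
  have h1 : finrank K ↥(U ⊓ W) ≤ finrank K ↥(U ⊔ W) :=
    Submodule.finrank_mono inf_le_sup
  have h2 := Submodule.finrank_sup_add_finrank_inf_eq U W
  rw [dS]
  omega

lemma dS_triangle (X Y Z : Submodule K V) : dS X Z ≤ dS X Y + dS Y Z := by
  have key : finrank K ↥(X ⊓ Y) + finrank K ↥(Y ⊓ Z) ≤
      finrank K ↥Y + finrank K ↥(X ⊓ Z) := by
    have h2 := Submodule.finrank_sup_add_finrank_inf_eq (X ⊓ Y) (Y ⊓ Z)
    have h3 : finrank K ↥((X ⊓ Y) ⊔ (Y ⊓ Z)) ≤ finrank K ↥Y :=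
      Submodule.finrank_mono (sup_le inf_le_right inf_le_left)
    have h4 : finrank K ↥((X ⊓ Y) ⊓ (Y ⊓ Z)) ≤ finrank K ↥(X ⊓ Z) :=
      Submodule.finrank_mono
        (le_inf (le_trans inf_le_left inf_le_left) (le_trans inf_le_right inf_le_right))
    omega
  have c1 := dS_cast X Z
  have c2 := dS_cast X Y
  have c3 := dS_cast Y Z
  omega

lemma dSn_comm {n : ℕ} (X Y : Fin n → Submodule K V) : dSn X Y = dSn Y X := by
  simp [dSn, dS_comm]

lemma dSn_triangle {n : ℕ} (X Y Z : Fin n → Submodule K V) :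
    dSn X Z ≤ dSn X Y + dSn Y Z := by
  rw [dSn, dSn, dSn, ← Finset.sum_add_distrib]
  exact Finset.sum_le_sum fun i _ => dS_triangle (X i) (Y i) (Z i)

end MetricLemmas

/-- Sphere packing bound for general broadcast subspace codes:
`T_n(s₁, |M₁|, ⌊(s₂-1)/2⌋) · |M₂| ≤ |P(F_q^m)|^n`. -/
theorem stmt9 (q m n : ℕ) (K : Type*) [Field K] [Fintype K] (hq : Fintype.card K = q)
    (M₁ M₂ : Type*) [Finite M₁] [Finite M₂]
    (hM₁ : 2 ≤ Nat.card M₁) (hM₂ : 2 ≤ Nat.card M₂)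
    (γ : M₁ × M₂ → (Fin n → Submodule K (Fin m → K))) (hγ : Function.Injective γ)
    (s₁ s₂ : ℕ) (hs : s₁ < s₂)
    (hs₁ : IsLeast {d | ∃ p p' : M₁ × M₂, p.1 ≠ p'.1 ∧ d = dSn (γ p) (γ p')} s₁)
    (hs₂ : IsLeast {d | ∃ p p' : M₁ × M₂, p.2 ≠ p'.2 ∧ d = dSn (γ p) (γ p')} s₂) :
    Tn K m n s₁ (Nat.card M₁) ((s₂ - 1) / 2) * Nat.card M₂ ≤
      (Nat.card (Submodule K (Fin m → K))) ^ n := by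
  classical
  haveI : Finite (Submodule K (Fin m → K)) :=
    Finite.of_injective (fun W : Submodule K (Fin m → K) => (W : Set (Fin m → K)))
      SetLike.coe_injective
  haveI : Fintype (Fin n → Submodule K (Fin m → K)) := Fintype.ofFinite _
  haveI : Fintype M₂ := Fintype.ofFinite M₂
  have hM₁pos : 0 < Nat.card M₁ := by omega
  haveI : Nonempty M₁ := (Nat.card_pos_iff.mp hM₁pos).1
  set r := (s₂ - 1) / 2 with hr
  set S : M₂ → Set (Fin n → Submodule K (Fin m → K)) :=
    fun b => Set.range (fun a : M₁ => γ (a, b)) with hS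
  -- each S b qualifies in the definition of Tn
  have hTle : ∀ b : M₂, Tn K m n s₁ (Nat.card M₁) r ≤ Nat.card ↥(nbhdS r (S b)) := by
    intro b
    apply Nat.sInf_le
    refine ⟨S b, ?_, ?_, rfl⟩
    · exact Nat.card_range_of_injective (fun a a' h => by
        have := hγ h; exact (Prod.mk.injEq _ _ _ _).mp this |>.1)
    · rintro X ⟨a, rfl⟩ Y ⟨a', rfl⟩ hne
      have ha : a ≠ a' := fun h => hne (by rw [h])
      exact hs₁.2 ⟨(a, b), (a', b), ha, rfl⟩
  -- disjointness of neighborhoods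
  have hdisj : ∀ b b' : M₂, b ≠ b' →
      Disjoint (nbhdS r (S b)) (nbhdS r (S b')) := by
    intro b b' hbb'
    rw [Set.disjoint_left]
    rintro U hU hU'
    simp only [nbhdS, Set.mem_iUnion] at hU hU'
    obtain ⟨C, ⟨a, rfl⟩, hC⟩ := hU
    obtain ⟨C', ⟨a', rfl⟩, hC'⟩ := hU'
    have h1 : dSn U (γ (a, b)) ≤ r := hC
    have h2 : dSn U (γ (a', b')) ≤ r := hC'
    have htri : dSn (γ (a, b)) (γ (a', b')) ≤ 2 * r := by
      calc dSn (γ (a, b)) (γ (a', b')) ≤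
          dSn (γ (a, b)) U + dSn U (γ (a', b')) := dSn_triangle _ _ _
        _ ≤ r + r := by rw [dSn_comm]; omega
        _ = 2 * r := by ring
    have hge : s₂ ≤ dSn (γ (a, b)) (γ (a', b')) := hs₂.2 ⟨(a, b), (a', b'), hbb', rfl⟩
    omega
  -- counting
  have hcount : ∑ b : M₂, (nbhdS r (S b)).toFinset.card ≤
      Fintype.card (Fin n → Submodule K (Fin m → K)) := by
    rw [← Finset.card_biUnion]
    · exact Finset.card_le_card (Finset.subset_univ _)
    · intro x _ y _ hxy
      dsimp only [Function.onFun]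
      rw [Finset.disjoint_left]
      intro u hu hu'
      rw [Set.mem_toFinset] at hu hu'
      exact Set.disjoint_left.mp (hdisj x y hxy) hu hu'
  have hlow : Nat.card M₂ * Tn K m n s₁ (Nat.card M₁) r ≤
      ∑ b : M₂, (nbhdS r (S b)).toFinset.card := by
    rw [Nat.card_eq_fintype_card, ← Finset.card_univ, ← smul_eq_mul]
    apply Finset.card_nsmul_le_sum
    intro b _
    rw [Set.toFinset_card, ← Nat.card_eq_fintype_card]
    exact hTle b
  have hcardpi : Fintype.card (Fin n → Submodule K (Fin m → K)) =
      (Nat.card (Submodule K (Fin m → K))) ^ n := by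
    rw [← Nat.card_eq_fintype_card, Nat.card_pi]
    simp
  calc Tn K m n s₁ (Nat.card M₁) r * Nat.card M₂
      = Nat.card M₂ * Tn K m n s₁ (Nat.card M₁) r := by ring
    _ ≤ ∑ b : M₂, (nbhdS r (S b)).toFinset.card := hlow
    _ ≤ Fintype.card (Fin n → Submodule K (Fin m → K)) := hcount
    _ = (Nat.card (Submodule K (Fin m → K))) ^ n := hcardpi
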